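/- For every complex number z, the determinant det( Complex.cosh(z·b) • (1 : E_ℂ →ₗ[ℂ] E_ℂ) − (Complex.sinh(z·b)/b) • A_ℂ ) vanishes if and only if either (a) there exist a real eigenvalue λ of A with |λ| > b and an integer k such that z = (Real.artanh (b/λ) + k·π·I)/b, or (b) there exist a real eigenvalue λ of A with |λ| < b and an integer k such that z = (Real.artanh (λ/b) + (k + 1/2)·π·I)/b. -/

import Mathlib

set_option synthInstance.maxHeartbeats 1000000
set_option maxHeartbeats 1000000

open scoped TensorProduct

/-- The inverse hyperbolic tangent on `(-1, 1)` (not present in Mathlib),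
`artanh x = (1/2) · log((1+x)/(1-x))`. -/
noncomputable def Real.artanhOfLog (x : ℝ) : ℝ := (1 / 2) * Real.log ((1 + x) / (1 - x))

open Complex in
/-- Scalar version: solving `cosh w = (l/b) sinh w` for complex `w`. -/
lemma cosh_sub_mul_sinh_eq_zero_iff (l b : ℝ) (hb : 0 < b) (w : ℂ) :
    Complex.cosh w - ((l:ℂ)/(b:ℂ)) * Complex.sinh w = 0 ↔
      (b < |l| ∧ ∃ k : ℤ, w = (Real.artanhOfLog (b/l) : ℂ) + (k:ℂ) * (Real.pi:ℂ) * I) ∨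
      (|l| < b ∧ ∃ k : ℤ, w = (Real.artanhOfLog (l/b) : ℂ) + ((k:ℂ) + 1/2) * (Real.pi:ℂ) * I) := by
  have hb0 : (b:ℂ) ≠ 0 := by exact_mod_cast hb.ne'
  have ht : Complex.exp w ≠ 0 := Complex.exp_ne_zero w
  have e2 : Complex.exp (2*w) = Complex.exp w * Complex.exp w := by
    rw [two_mul, Complex.exp_add]
  have hmul : (Complex.cosh w - ((l:ℂ)/b) * Complex.sinh w) * (2 * b * Complex.exp w)
      = ((l:ℂ) + b) - Complex.exp (2*w) * ((l:ℂ) - b) := by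
    rw [Complex.cosh, Complex.sinh, e2, Complex.exp_neg]
    field_simp
    ring
  have key : (Complex.cosh w - ((l:ℂ)/b) * Complex.sinh w = 0) ↔
      Complex.exp (2*w) * ((l:ℂ) - b) = (l:ℂ) + b := by
    constructor
    · intro h
      rw [h, zero_mul] at hmul
      linear_combination hmul
    · intro h
      rw [h] at hmul
      simp only [sub_self] at hmul
      rcases mul_eq_zero.mp hmul with h' | h'
      · exact h'
      · exfalso
        rcases mul_eq_zero.mp h' with h'' | h''
        · apply hb0
          linear_combination h'' / 2
        · exact ht h''
  rw [key]
  rcases lt_trichotomy |l| b with hlt | heq | hgt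
  · -- |l| < b : case (b)
    have hl1 : -b < l := (abs_lt.mp hlt).1
    have hl2 : l < b := (abs_lt.mp hlt).2
    have hlb : (l:ℂ) - b ≠ 0 := by
      intro h; exact hl2.ne (by exact_mod_cast sub_eq_zero.mp h)
    set c : ℝ := (b + l) / (b - l) with hc_def
    have hc : 0 < c := div_pos (by linarith) (by linarith)
    have hart : Real.artanhOfLog (l/b) = 1/2 * Real.log c := by
      have harg : (1 + l/b)/(1 - l/b) = c := by
        rw [hc_def, div_eq_div_iff (by
          intro h
          have : l / b = 1 := by linarith
          have : l = b := by rwa [div_eq_one_iff_eq hb.ne'] at this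
          linarith) (by intro h; have : b = l := by linarith
                        linarith)]
        field_simp
      unfold Real.artanhOfLog
      rw [harg]
    have hrhs : ((l:ℂ) + b)/((l:ℂ) - b) = -(c:ℂ) := by
      rw [hc_def]
      push_cast
      rw [show (l:ℂ) - b = -((b:ℂ) - l) by ring, div_neg, show (l:ℂ) + b = (b:ℂ) + l by ring]
    rw [show (Complex.exp (2*w) * ((l:ℂ) - b) = (l:ℂ) + b) ↔
        (Complex.exp (2*w) = ((l:ℂ) + b)/((l:ℂ) - b)) from (eq_div_iff hlb).symm,
      hrhs]
    have hneg : -(c:ℂ) = Complex.exp ((Real.log c : ℂ) + Real.pi * I) := by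
      rw [Complex.exp_add, Complex.exp_pi_mul_I, ← Complex.ofReal_exp, Real.exp_log hc]
      ring
    rw [hneg, Complex.exp_eq_exp_iff_exists_int]
    constructor
    · rintro ⟨n, hn⟩
      refine Or.inr ⟨hlt, n, ?_⟩
      rw [hart]
      push_cast
      linear_combination hn / 2
    · rintro (⟨hc', _⟩ | ⟨_, n, hn⟩)
      · exact absurd hc' (by linarith)
      · refine ⟨n, ?_⟩
        rw [hart] at hn
        push_cast at hn
        linear_combination 2 * hn
  · -- |l| = b : no solutions
    constructor
    · intro h
      exfalso
      rcases (abs_eq hb.le).mp heq with h1 | h1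
      · rw [h1, sub_self, mul_zero] at h
        have : b + b = 0 := by exact_mod_cast h.symm
        linarith
      · rw [h1] at h
        push_cast at h
        have h2 : Complex.exp (2*w) * (2*(b:ℂ)) = 0 := by linear_combination -h
        rcases mul_eq_zero.mp h2 with h' | h'
        · exact Complex.exp_ne_zero _ h'
        · exact hb0 (by linear_combination h' / 2)
    · rintro (⟨hc', _⟩ | ⟨hc', _⟩) <;> rw [heq] at hc' <;> exact (lt_irrefl b hc').elim
  · -- b < |l| : case (a)
    have hl0 : l ≠ 0 := by
      intro h; rw [h, abs_zero] at hgt; linarith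
    have hlb : l - b ≠ 0 := by
      intro h
      have : l = b := by linarith
      rw [this, abs_of_pos hb] at hgt; exact lt_irrefl b hgt
    have hlbc : (l:ℂ) - b ≠ 0 := by
      intro h
      apply hlb
      have h2 : l = b := by exact_mod_cast sub_eq_zero.mp h
      linarith
    set c : ℝ := (l + b) / (l - b) with hc_def
    have hc : 0 < c := by
      rcases lt_abs.mp hgt with h | h
      · exact div_pos (by linarith) (by linarith)
      · exact div_pos_of_neg_of_neg (by linarith) (by linarith)
    have hart : Real.artanhOfLog (b/l) = 1/2 * Real.log c := by
      have harg : (1 + b/l)/(1 - b/l) = c := by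
        rw [hc_def, div_eq_div_iff (by
          intro h
          have : b / l = 1 := by linarith
          have : b = l := by rwa [div_eq_one_iff_eq hl0] at this
          exact hlb (by linarith)) hlb]
        field_simp
      unfold Real.artanhOfLog
      rw [harg]
    have hrhs : ((l:ℂ) + b)/((l:ℂ) - b) = (c:ℂ) := by
      rw [hc_def]; push_cast; ring
    rw [show (Complex.exp (2*w) * ((l:ℂ) - b) = (l:ℂ) + b) ↔
        (Complex.exp (2*w) = ((l:ℂ) + b)/((l:ℂ) - b)) from (eq_div_iff hlbc).symm,
      hrhs]
    have hcx : (c:ℂ) = Complex.exp ((Real.log c : ℂ)) := by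
      rw [← Complex.ofReal_exp, Real.exp_log hc]
    rw [hcx, Complex.exp_eq_exp_iff_exists_int]
    constructor
    · rintro ⟨n, hn⟩
      refine Or.inl ⟨hgt, n, ?_⟩
      rw [hart]
      push_cast
      linear_combination hn / 2
    · rintro (⟨_, n, hn⟩ | ⟨hc', _⟩)
      · refine ⟨n, ?_⟩
        rw [hart] at hn
        push_cast at hn
        linear_combination 2 * hn
      · exact absurd hc' (by linarith)

/-- Let `E` be a finite-dimensional real inner product space, `A` a self-adjoint
endomorphism of `E`, `b > 0`, `E_ℂ := ℂ ⊗[ℝ] E` the complexification of `E` and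
`A_ℂ := LinearMap.baseChange ℂ A` the complexified endomorphism.  For every complex number `z`,
the determinant `det(cosh(z·b) • id − (sinh(z·b)/b) • A_ℂ)` vanishes if and only if either
(a) there exist a real eigenvalue `λ` of `A` with `|λ| > b` and an integer `k` with
`z = (artanh (b/λ) + k·π·I)/b`, or (b) there exist a real eigenvalue `λ` of `A` with `|λ| < b`
and an integer `k` with `z = (artanh (λ/b) + (k + 1/2)·π·I)/b`. -/
theorem det_complexified_cosh_smul_sub_sinh_smul_eq_zero_iff
    {E : Type*} [NormedAddCommGroup E] [InnerProductSpace ℝ E] [FiniteDimensional ℝ E]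
    (A : E →ₗ[ℝ] E) (hA : A.IsSymmetric) (b : ℝ) (hb : 0 < b) (z : ℂ) :
    LinearMap.det (Complex.cosh (z * (b : ℂ)) • (1 : ℂ ⊗[ℝ] E →ₗ[ℂ] ℂ ⊗[ℝ] E)
        - (Complex.sinh (z * (b : ℂ)) / (b : ℂ)) • LinearMap.baseChange ℂ A) = 0 ↔
      (∃ l : ℝ, Module.End.HasEigenvalue A l ∧ b < |l| ∧
        ∃ k : ℤ, z = ((Real.artanhOfLog (b / l) : ℂ) + (k : ℂ) * (Real.pi : ℂ) * Complex.I) / (b : ℂ)) ∨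
      (∃ l : ℝ, Module.End.HasEigenvalue A l ∧ |l| < b ∧
        ∃ k : ℤ, z = ((Real.artanhOfLog (l / b) : ℂ)
          + ((k : ℂ) + 1 / 2) * (Real.pi : ℂ) * Complex.I) / (b : ℂ)) := by
  classical
  have hb0 : (b:ℂ) ≠ 0 := by exact_mod_cast hb.ne'
  set cs := Complex.cosh (z * (b:ℂ)) with hcs
  set sn := Complex.sinh (z * (b:ℂ)) / (b:ℂ) with hsn
  have hn : Module.finrank ℝ E = Module.finrank ℝ E := rfl
  set n := Module.finrank ℝ E
  let β : OrthonormalBasis (Fin n) ℝ E := hA.eigenvectorBasis hn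
  let μ : Fin n → ℝ := hA.eigenvalues hn
  let B : Module.Basis (Fin n) ℝ E := β.toBasis
  let Bc : Module.Basis (Fin n) ℂ (ℂ ⊗[ℝ] E) := Algebra.TensorProduct.basis ℂ B
  -- the eigenvalues of `A` are exactly the `μ i`
  have heig : ∀ r : ℝ, Module.End.HasEigenvalue A r ↔ ∃ i, μ i = r := by
    intro r
    constructor
    · intro h
      by_contra hc
      push_neg at hc
      obtain ⟨v, hv⟩ := h.exists_hasEigenvector
      apply hv.2
      have hv0 : ∀ i, β.repr v i = 0 := by
        intro i
        have h1 : β.repr (A v) i = μ i * β.repr v i :=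
          hA.eigenvectorBasis_apply_self_apply hn v i
        have h2 : β.repr (A v) i = r * β.repr v i := by
          rw [hv.apply_eq_smul, map_smul]
          rfl
        have h3 : (μ i - r) * β.repr v i = 0 := by
          rw [sub_mul, h1.symm.trans h2]
          ring
        rcases mul_eq_zero.mp h3 with h4 | h4
        · exact absurd (by linarith [sub_eq_zero.mp h4] : μ i = r) (hc i)
        · exact h4
      apply β.repr.injective
      ext i
      simp [hv0 i]
    · rintro ⟨i, rfl⟩
      exact hA.hasEigenvalue_eigenvalues hn i
  -- the determinant is the product of the diagonal entries
  have hMA : LinearMap.toMatrix B B A = Matrix.diagonal μ := by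
    ext i j
    rw [LinearMap.toMatrix_apply]
    have hAB : A (B j) = μ j • B j := by
      rw [show (B j) = β j from by simp [B]]
      exact hA.apply_eigenvectorBasis hn j
    rw [hAB, map_smul, B.repr_self]
    rcases eq_or_ne i j with h | h
    · simp [Matrix.diagonal_apply, h, Finsupp.single_apply]
    · simp [Matrix.diagonal_apply, h, Finsupp.single_apply, Ne.symm h]
  have hM : LinearMap.toMatrix Bc Bc (cs • 1 - sn • LinearMap.baseChange ℂ A)
      = Matrix.diagonal (fun i => cs - sn * (μ i : ℂ)) := by
    rw [map_sub, map_smul, map_smul,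
      LinearMap.toMatrix_one, LinearMap.toMatrix_baseChange, hMA,
      Matrix.diagonal_map (map_zero (algebraMap ℝ ℂ))]
    ext i j
    rcases eq_or_ne i j with h | h
    · simp [Matrix.diagonal_apply, h, Matrix.one_apply]
    · simp [Matrix.diagonal_apply, h, Matrix.one_apply]
  have hdet : LinearMap.det (cs • (1 : ℂ ⊗[ℝ] E →ₗ[ℂ] ℂ ⊗[ℝ] E)
      - sn • LinearMap.baseChange ℂ A) = ∏ i, (cs - sn * (μ i : ℂ)) := by
    rw [← LinearMap.det_toMatrix Bc, hM, Matrix.det_diagonal]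
  rw [hdet, Finset.prod_eq_zero_iff]
  -- each factor vanishes as described by the scalar lemma
  have hterm : ∀ i : Fin n, (cs - sn * (μ i : ℂ) = 0) ↔
      (b < |μ i| ∧ ∃ k : ℤ, z * (b:ℂ) = (Real.artanhOfLog (b/(μ i)) : ℂ)
        + (k:ℂ) * (Real.pi:ℂ) * Complex.I) ∨
      (|μ i| < b ∧ ∃ k : ℤ, z * (b:ℂ) = (Real.artanhOfLog ((μ i)/b) : ℂ)
        + ((k:ℂ) + 1/2) * (Real.pi:ℂ) * Complex.I) := by
    intro i
    rw [show cs - sn * (μ i : ℂ)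
        = Complex.cosh (z * (b:ℂ)) - (((μ i : ℝ):ℂ)/(b:ℂ)) * Complex.sinh (z * (b:ℂ)) by
      rw [hcs, hsn]; ring]
    exact cosh_sub_mul_sinh_eq_zero_iff (μ i) b hb (z * (b:ℂ))
  constructor
  · rintro ⟨i, -, h0⟩
    rcases (hterm i).mp h0 with ⟨hgt, k, hk⟩ | ⟨hlt, k, hk⟩
    · exact Or.inl ⟨μ i, (heig (μ i)).mpr ⟨i, rfl⟩, hgt, k, (eq_div_iff hb0).mpr hk⟩
    · exact Or.inr ⟨μ i, (heig (μ i)).mpr ⟨i, rfl⟩, hlt, k, (eq_div_iff hb0).mpr hk⟩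
  · rintro (⟨l, hl, hgt, k, hk⟩ | ⟨l, hl, hlt, k, hk⟩) <;>
      obtain ⟨i, hi⟩ := (heig l).mp hl <;>
      refine ⟨i, Finset.mem_univ i, (hterm i).mpr ?_⟩ <;> rw [hi]
    · exact Or.inl ⟨hgt, k, (eq_div_iff hb0).mp hk⟩
    · exact Or.inr ⟨hlt, k, (eq_div_iff hb0).mp hk⟩
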